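/- Let ℓ ≥ 1 and let q̄(w) = Σ_{k=0}^{ℓ} binom(−1/2,k)(−2)^k w^{ℓ−k}. If q is any monic polynomial of degree ℓ with coefficient of w^{ℓ−1} equal to 1 such that (2ℓ+1)(w−2)q(w) − w·q(w) − 2w(w−2)q′(w) is constant, then q = q̄. -/

import Mathlib

open Polynomial

/-- The generalized binomial coefficient `binom(−1/2, k)`. -/
noncomputable def gbinom (k : ℕ) : ℂ :=
  (∏ j ∈ Finset.range k, ((-1/2 : ℂ) - j)) / (Nat.factorial k)

/-- `q̄(w) = Σ_{k=0}^{ℓ} binom(−1/2,k)(−2)^k w^{ℓ−k}`. -/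
noncomputable def qbar (ℓ : ℕ) : Polynomial ℂ :=
  ∑ k ∈ Finset.range (ℓ + 1), C (gbinom k * (-2 : ℂ) ^ k) * X ^ (ℓ - k)

private noncomputable def cc (m : ℕ) : ℂ := gbinom m * (-2 : ℂ) ^ m

private lemma cc_zero : cc 0 = 1 := by simp [cc, gbinom]

private lemma cc_step (m : ℕ) : ((m : ℂ) + 1) * cc (m + 1) = (2 * m + 1) * cc m := by
  have hf : ((Nat.factorial m : ℂ)) ≠ 0 := by
    exact_mod_cast Nat.cast_ne_zero.mpr (Nat.factorial_ne_zero m)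
  have hm1 : ((m : ℂ) + 1) ≠ 0 := Nat.cast_add_one_ne_zero m
  simp only [cc, gbinom, Finset.prod_range_succ, Nat.factorial_succ, Nat.cast_mul,
    Nat.cast_add, Nat.cast_one, pow_succ]
  field_simp
  ring

private lemma Xderiv_coeff (q : Polynomial ℂ) (n : ℕ) :
    (X * derivative q).coeff n = n * q.coeff n := by
  cases n with
  | zero => simp [mul_coeff_zero]
  | succ n =>
    rw [coeff_X_mul, coeff_derivative]
    push_cast
    ring

private lemma key (ℓ : ℕ) (q : Polynomial ℂ) (K : ℂ)
    (h : C (2 * (ℓ : ℂ) + 1) * ((X - C 2) * q) - X * q - C 2 * X * (X - C 2) * derivative q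
      = C K) (j : ℕ) :
    2 * ((ℓ : ℂ) - j) * q.coeff j = (4 * (ℓ : ℂ) - 4 * j - 2) * q.coeff (j + 1) := by
  have h2 : C (2 * (ℓ : ℂ) + 1) * (X * q) - C (2 * (ℓ : ℂ) + 1) * (C 2 * q) - X * q
      - (C 2 * (X * (X * derivative q)) - C 2 * (C 2 * (X * derivative q))) = C K := by
    rw [← h]; ring
  have h3 := congrArg (fun p => Polynomial.coeff p (j + 1)) h2
  simp only [coeff_sub, coeff_C_mul, coeff_X_mul, Xderiv_coeff, coeff_derivative, coeff_C,
    Nat.succ_ne_zero, if_false] at h3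
  push_cast at h3 ⊢
  linear_combination h3

theorem stmt19 (ℓ : ℕ) (hℓ : 1 ≤ ℓ) (q : Polynomial ℂ)
    (hmonic : q.Monic) (hdeg : q.natDegree = ℓ) (hcoeff : q.coeff (ℓ - 1) = 1)
    (hconst : ∃ K : ℂ,
      C (2 * (ℓ : ℂ) + 1) * ((X - C 2) * q) - X * q - C 2 * X * (X - C 2) * derivative q
        = C K) :
    q = qbar ℓ := by
  obtain ⟨K, hK⟩ := hconst
  -- the coefficients of q satisfy the closed formula
  have main : ∀ m : ℕ, m ≤ ℓ → q.coeff (ℓ - m) = cc m := by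
    intro m
    induction m with
    | zero =>
      intro _
      simpa [cc_zero, hdeg] using hmonic.coeff_natDegree
    | succ m ih =>
      intro hm
      have hmℓ : m ≤ ℓ := Nat.le_of_succ_le hm
      have hij : ℓ - (m + 1) + 1 = ℓ - m := by omega
      have hc2 : ((ℓ - (m + 1) : ℕ) : ℂ) = (ℓ : ℂ) - ((m : ℂ) + 1) := by
        push_cast [Nat.cast_sub hm]; ring
      have hk := key ℓ q K hK (ℓ - (m + 1))
      rw [hij, ih hmℓ] at hk
      have h2 : 2 * ((m : ℂ) + 1) ≠ 0 := by
        have h1 : ((m : ℂ) + 1) ≠ 0 := Nat.cast_add_one_ne_zero m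
        simpa using h1
      apply mul_left_cancel₀ h2
      linear_combination hk - 2 * cc_step m +
        (2 * q.coeff (ℓ - (m + 1)) - 4 * cc m) * hc2
  -- coefficients of qbar
  have hqbar : ∀ n : ℕ, (qbar ℓ).coeff n = if n ≤ ℓ then cc (ℓ - n) else 0 := by
    intro n
    rw [qbar, finset_sum_coeff]
    simp only [coeff_C_mul, coeff_X_pow]
    by_cases hn : n ≤ ℓ
    · rw [if_pos hn, Finset.sum_eq_single (ℓ - n)]
      · rw [if_pos (by omega)]
        simp [cc]
      · intro k hk hne
        rw [if_neg (by simp at hk; omega), mul_zero]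
      · intro hk
        exact absurd (Finset.mem_range.mpr (by omega)) hk
    · rw [if_neg hn]
      apply Finset.sum_eq_zero
      intro k hk
      rw [if_neg (by simp at hk; omega), mul_zero]
  ext n
  rw [hqbar n]
  by_cases hn : n ≤ ℓ
  · rw [if_pos hn]
    have := main (ℓ - n) (by omega)
    rwa [Nat.sub_sub_self hn] at this
  · rw [if_neg hn]
    exact coeff_eq_zero_of_natDegree_lt (by omega)
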